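/- Let C ↔ f : [a,b] → ℝ^M (a < b) be a continuous and rectifiable curve and let s(x) = ℓ of f restricted to [a,x] be its arc length function. Then for Lebesgue-almost every x ∈ [a,b], both s′(x) and f′(x) exist and s′(x) = ‖f′(x)‖. -/

import Mathlib

open scoped BigOperators ENNReal
open MeasureTheory Filter

noncomputable section

/-- A partition `a = x 0 < x 1 < ⋯ < x n = b` of the interval `[a,b]`. -/
structure IntervalPartition (a b : ℝ) where
  n : ℕ
  x : Fin (n + 1) → ℝ
  mono : StrictMono x
  first : x 0 = a
  last : x (Fin.last n) = b

/-- The mesh `‖P‖ = maxᵢ (xᵢ − xᵢ₋₁)` of a partition. -/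
def IntervalPartition.mesh {a b : ℝ} (P : IntervalPartition a b) : ℝ :=
  ⨆ i : Fin P.n, (P.x i.succ - P.x i.castSucc)

/-- The inscribed sum `V(f;P) = Σᵢ ‖f(xᵢ) − f(xᵢ₋₁)‖`. -/
def inscribedSum {M : ℕ} (f : ℝ → EuclideanSpace ℝ (Fin M)) {a b : ℝ}
    (P : IntervalPartition a b) : ℝ :=
  ∑ i : Fin P.n, ‖f (P.x i.succ) - f (P.x i.castSucc)‖

/-- The length `ℓ(C)` of the curve `C ↔ f : [a,b] → ℝ^M`: the supremum of the inscribed sums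
over all partitions of `[a,b]`, a value in `[0,+∞]`. -/
def curveLength {M : ℕ} (f : ℝ → EuclideanSpace ℝ (Fin M)) (a b : ℝ) : ℝ≥0∞ :=
  ⨆ P : IntervalPartition a b, ENNReal.ofReal (inscribedSum f P)

/-- The total variation `T_h[a,b]` of a real function `h` on `[a,b]`. -/
def totalVariation (h : ℝ → ℝ) (a b : ℝ) : ℝ≥0∞ :=
  ⨆ P : IntervalPartition a b, ENNReal.ofReal (∑ i : Fin P.n, |h (P.x i.succ) - h (P.x i.castSucc)|)

/-- The positive variation `T_h⁺[a,b]` of a real function `h` on `[a,b]`. -/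
def posVariation (h : ℝ → ℝ) (a b : ℝ) : ℝ≥0∞ :=
  ⨆ P : IntervalPartition a b,
    ENNReal.ofReal (∑ i : Fin P.n, max (h (P.x i.succ) - h (P.x i.castSucc)) 0)

/-- The negative variation `T_h⁻[a,b]` of a real function `h` on `[a,b]`. -/
def negVariation (h : ℝ → ℝ) (a b : ℝ) : ℝ≥0∞ :=
  ⨆ P : IntervalPartition a b,
    ENNReal.ofReal (∑ i : Fin P.n, max (h (P.x i.castSucc) - h (P.x i.succ)) 0)

/-- `h` is absolutely continuous on `[a,b]`: for every `ε > 0` there is `δ > 0` such that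
`Σᵢ |h(vᵢ) − h(uᵢ)| < ε` for every finite family of pairwise non-overlapping subintervals
`[uᵢ,vᵢ]` of `[a,b]` of total length `< δ`. -/
def AbsContOn (h : ℝ → ℝ) (a b : ℝ) : Prop :=
  ∀ ε > (0 : ℝ), ∃ δ > (0 : ℝ), ∀ n : ℕ, ∀ u v : Fin n → ℝ,
    (∀ i, a ≤ u i ∧ u i ≤ v i ∧ v i ≤ b) →
    (∀ i j, i ≠ j → Set.Ioo (u i) (v i) ∩ Set.Ioo (u j) (v j) = ∅) →
    (∑ i, (v i - u i)) < δ → (∑ i, |h (v i) - h (u i)|) < ε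

/-- `φ` is an increasing homeomorphism of `[a,b]` onto `[c,d]` sending `a` to `c` and `b` to `d`. -/
def IsIncrHomeo (φ : ℝ → ℝ) (a b c d : ℝ) : Prop :=
  ContinuousOn φ (Set.Icc a b) ∧ StrictMonoOn φ (Set.Icc a b) ∧ φ a = c ∧ φ b = d

/-- `f : [a,b] → ℝ^M` and `g : [c,d] → ℝ^M` are Fréchet equivalent. -/
def FrechetEquiv {M : ℕ} (f : ℝ → EuclideanSpace ℝ (Fin M)) (a b : ℝ)
    (g : ℝ → EuclideanSpace ℝ (Fin M)) (c d : ℝ) : Prop :=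
  ∀ ε > (0 : ℝ), ∃ φ : ℝ → ℝ, IsIncrHomeo φ a b c d ∧
    ∀ x ∈ Set.Icc a b, ‖f x - g (φ x)‖ < ε

/-- The Fréchet distance between the curves `C ↔ f : [a,b] → ℝ^M` and `D ↔ g : [c,d] → ℝ^M`. -/
def frechetDist {M : ℕ} (f : ℝ → EuclideanSpace ℝ (Fin M)) (a b : ℝ)
    (g : ℝ → EuclideanSpace ℝ (Fin M)) (c d : ℝ) : ℝ :=
  ⨅ φ : {φ : ℝ → ℝ // IsIncrHomeo φ a b c d}, ⨆ x ∈ Set.Icc a b, ‖f x - g (φ.1 x)‖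

/-- A parametric integrand: a continuous `F : ℝ^M × ℝ^M → ℝ` positively homogeneous of
degree 1 in the second variable. -/
def IsParametricIntegrand {M : ℕ}
    (F : EuclideanSpace ℝ (Fin M) → EuclideanSpace ℝ (Fin M) → ℝ) : Prop :=
  Continuous (fun p : EuclideanSpace ℝ (Fin M) × EuclideanSpace ℝ (Fin M) => F p.1 p.2) ∧
  ∀ K : ℝ, 0 ≤ K → ∀ x t, F x (K • t) = K * F x t

/-- `L` is the line integral `∫_C F` of `F` along the curve `C ↔ f : [a,b] → ℝ^M`:
the limit, as the mesh tends to `0`, of the Riemann-type sums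
`Σᵢ F(f(ξᵢ), f(xᵢ) − f(xᵢ₋₁))` over tagged partitions of `[a,b]`. -/
def IsLineIntegral {M : ℕ} (F : EuclideanSpace ℝ (Fin M) → EuclideanSpace ℝ (Fin M) → ℝ)
    (f : ℝ → EuclideanSpace ℝ (Fin M)) (a b : ℝ) (L : ℝ) : Prop :=
  ∀ ε > (0 : ℝ), ∃ δ > (0 : ℝ), ∀ P : IntervalPartition a b, P.mesh < δ →
    ∀ ξ : Fin P.n → ℝ, (∀ i, ξ i ∈ Set.Icc (P.x i.castSucc) (P.x i.succ)) →
    |(∑ i : Fin P.n, F (f (ξ i)) (f (P.x i.succ) - f (P.x i.castSucc))) - L| < ε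

open scoped Topology
section Basics

variable {M : ℕ} (f : ℝ → EuclideanSpace ℝ (Fin M))

/-- The points of a partition as a `ℕ`-indexed (capped) sequence. -/
def IntervalPartition.X {a b : ℝ} (P : IntervalPartition a b) : ℕ → ℝ :=
  fun i => P.x ⟨min i P.n, by omega⟩

lemma IntervalPartition.X_mono {a b : ℝ} (P : IntervalPartition a b) : Monotone P.X := by
  intro i j hij
  exact P.mono.monotone (by simp [Fin.le_def]; omega)

lemma IntervalPartition.X_strict {a b : ℝ} (P : IntervalPartition a b) {i j : ℕ} (hi : i < j)
    (hj : j ≤ P.n) : P.X i < P.X j := by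
  apply P.mono
  simp [Fin.lt_def]; omega

lemma IntervalPartition.X_zero {a b : ℝ} (P : IntervalPartition a b) : P.X 0 = a :=
  (congrArg P.x (by ext; simp [IntervalPartition.X])).trans P.first

lemma IntervalPartition.X_last {a b : ℝ} (P : IntervalPartition a b) {i : ℕ} (hi : P.n ≤ i) :
    P.X i = b :=
  (congrArg P.x (by ext; show min i P.n = P.n; omega)).trans P.last

lemma IntervalPartition.X_mem {a b : ℝ} (P : IntervalPartition a b) (i : ℕ) :
    P.X i ∈ Set.Icc a b := by
  constructor
  · calc a = P.X 0 := P.X_zero.symm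
      _ ≤ P.X i := P.X_mono (Nat.zero_le _)
  · rcases le_or_gt i P.n with h | h
    · calc P.X i ≤ P.X P.n := P.X_mono h
        _ = b := P.X_last (le_refl P.n)
    · exact le_of_eq (P.X_last h.le)

lemma IntervalPartition.le_of_mem {a b : ℝ} (P : IntervalPartition a b) : a ≤ b :=
  (P.X_mem 0).2.trans_eq' P.X_zero

lemma inscribedSum_eq_range {a b : ℝ} (P : IntervalPartition a b) :
    inscribedSum f P = ∑ i ∈ Finset.range P.n, ‖f (P.X (i+1)) - f (P.X i)‖ := by
  unfold inscribedSum
  rw [← Fin.sum_univ_eq_sum_range (fun i : ℕ => ‖f (P.X (i+1)) - f (P.X i)‖) P.n]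
  apply Finset.sum_congr rfl
  intro i _
  have hlt := i.isLt
  have h1 : P.x i.succ = P.X (i.val + 1) := by
    unfold IntervalPartition.X
    exact congrArg P.x (by ext; show i.val + 1 = min (i.val + 1) P.n; omega)
  have h2 : P.x i.castSucc = P.X i.val := by
    unfold IntervalPartition.X
    exact congrArg P.x (by ext; show i.val = min i.val P.n; omega)
  rw [h1, h2]

lemma inscribedSum_nonneg {a b : ℝ} (P : IntervalPartition a b) : 0 ≤ inscribedSum f P :=
  Finset.sum_nonneg fun _ _ => norm_nonneg _

/-- The trivial partition of `[c,c]`. -/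
def IntervalPartition.single (c : ℝ) : IntervalPartition c c where
  n := 0
  x := fun _ => c
  mono := fun i j h => absurd (Fin.lt_iff_val_lt_val.mp h) (by omega)
  first := rfl
  last := rfl

/-- The two-point partition of `[c,d]`. -/
def IntervalPartition.pair {c d : ℝ} (h : c < d) : IntervalPartition c d where
  n := 1
  x := fun i => if i.val = 0 then c else d
  mono := by
    intro i j hij
    have hi : i.val < j.val := hij
    have hj : j.val = 1 := by omega
    have hi0 : i.val = 0 := by omega
    simp [hi0, hj, h]
  first := rfl
  last := rfl

lemma ofReal_inscribedSum_le {a b : ℝ} (P : IntervalPartition a b) :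
    ENNReal.ofReal (inscribedSum f P) ≤ curveLength f a b :=
  le_iSup (fun P : IntervalPartition a b => ENNReal.ofReal (inscribedSum f P)) P

lemma chord_le_curveLength {c d : ℝ} (h : c ≤ d) :
    ENNReal.ofReal ‖f d - f c‖ ≤ curveLength f c d := by
  rcases eq_or_lt_of_le h with rfl | h
  · simp
  · have := ofReal_inscribedSum_le f (IntervalPartition.pair h)
    refine le_trans (le_of_eq ?_) this
    congr 1
    simp [inscribedSum, IntervalPartition.pair, Fin.succ, Fin.castSucc]
    show ‖f d - f c‖ = ((1 : ℕ) : ℝ) * ‖f d - f c‖; simp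

/-- Drop the last point of a partition with at least one interval. -/
def IntervalPartition.init {c d : ℝ} (P : IntervalPartition c d) {m : ℕ} (hm : P.n = m + 1) :
    IntervalPartition c (P.X m) where
  n := m
  x := fun i => P.x ⟨i.val, by omega⟩
  mono := fun i j hij => P.mono (show (⟨i.val, _⟩ : Fin (P.n+1)) < ⟨j.val, _⟩ from hij)
  first := (congrArg P.x (by ext; simp)).trans P.first
  last := by
    unfold IntervalPartition.X
    exact congrArg P.x (by ext; show (Fin.last m).val = min m P.n; simp [Fin.last]; omega)

lemma IntervalPartition.init_X {c d : ℝ} (P : IntervalPartition c d) {m : ℕ} (hm : P.n = m + 1)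
    {i : ℕ} (hi : i ≤ m) : (P.init hm).X i = P.X i := by
  unfold IntervalPartition.X IntervalPartition.init
  exact congrArg P.x (Fin.ext (by show min i m = min i P.n; omega))

lemma inscribedSum_init {c d : ℝ} (P : IntervalPartition c d) {m : ℕ} (hm : P.n = m + 1) :
    inscribedSum f P = inscribedSum f (P.init hm) + ‖f d - f (P.X m)‖ := by
  rw [inscribedSum_eq_range, inscribedSum_eq_range]
  show (∑ i ∈ Finset.range P.n, _ : ℝ) = (∑ i ∈ Finset.range m, _) + _
  rw [hm, Finset.sum_range_succ]
  congr 1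
  · apply Finset.sum_congr rfl
    intro i hi
    simp only [Finset.mem_range] at hi
    rw [P.init_X hm (by omega), P.init_X hm (by omega)]
  · rw [P.X_last (by omega)]

/-- Append a point to a partition. -/
def IntervalPartition.snocP {c d : ℝ} (P : IntervalPartition c d) {e : ℝ} (h : d < e) :
    IntervalPartition c e where
  n := P.n + 1
  x := fun i => if hi : i.val ≤ P.n then P.x ⟨i.val, by omega⟩ else e
  mono := by
    intro i j hij
    have hij' : i.val < j.val := hij
    by_cases hj : j.val ≤ P.n
    · have hi : i.val ≤ P.n := by omega
      simp only [dif_pos hi, dif_pos hj]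
      exact P.mono (show (⟨i.val, _⟩ : Fin (P.n+1)) < ⟨j.val, _⟩ from hij')
    · by_cases hi : i.val ≤ P.n
      · simp only [dif_pos hi, dif_neg hj]
        calc P.x ⟨i.val, by omega⟩ ≤ P.x (Fin.last P.n) := by
              apply P.mono.monotone
              simp [Fin.le_def, Fin.last]; omega
          _ = d := P.last
          _ < e := h
      · omega
  first := by
    show (if hi : ((0 : Fin (P.n+1+1)).val ≤ P.n) then P.x ⟨_, _⟩ else e) = c
    rw [dif_pos (by simp)]
    exact (congrArg P.x (by ext; simp)).trans P.first
  last := by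
    show (if hi : ((Fin.last (P.n+1)).val ≤ P.n) then _ else e) = e
    rw [dif_neg]
    simp [Fin.last]

lemma IntervalPartition.snocP_X_le {c d : ℝ} (P : IntervalPartition c d) {e : ℝ} (h : d < e)
    {i : ℕ} (hi : i ≤ P.n) : (P.snocP h).X i = P.X i := by
  unfold IntervalPartition.X IntervalPartition.snocP
  show (if hi : _ ≤ P.n then _ else e) = _
  rw [dif_pos (by simp; omega)]
  congr 1
  ext
  simp
  omega

lemma IntervalPartition.snocP_X_top {c d : ℝ} (P : IntervalPartition c d) {e : ℝ} (h : d < e)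
    {i : ℕ} (hi : P.n < i) : (P.snocP h).X i = e :=
  (P.snocP h).X_last (by show P.n + 1 ≤ i; omega)

lemma inscribedSum_snocP {c d : ℝ} (P : IntervalPartition c d) {e : ℝ} (h : d < e) :
    inscribedSum f (P.snocP h) = inscribedSum f P + ‖f e - f d‖ := by
  rw [inscribedSum_eq_range, inscribedSum_eq_range]
  show (∑ i ∈ Finset.range (P.n + 1), _ : ℝ) = _
  rw [Finset.sum_range_succ]
  congr 1
  · apply Finset.sum_congr rfl
    intro i hi
    simp only [Finset.mem_range] at hi
    rw [P.snocP_X_le h (by omega), P.snocP_X_le h (by omega)]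
  · rw [P.snocP_X_top h (by omega), P.snocP_X_le h (le_refl _), P.X_last (le_refl _)]

end Basics
section Additivity

variable {M : ℕ} (f : ℝ → EuclideanSpace ℝ (Fin M))

lemma IntervalPartition.nonempty {c d : ℝ} (h : c ≤ d) : Nonempty (IntervalPartition c d) := by
  rcases eq_or_lt_of_le h with rfl | h
  · exact ⟨IntervalPartition.single c⟩
  · exact ⟨IntervalPartition.pair h⟩

lemma curveLength_self (c : ℝ) : curveLength f c c = 0 := by
  refine le_antisymm (iSup_le fun P => ?_) zero_le
  have hn : P.n = 0 := by
    by_contra hn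
    have := P.X_strict (Nat.pos_of_ne_zero hn) (le_refl P.n)
    rw [P.X_zero, P.X_last (le_refl P.n)] at this
    exact lt_irrefl _ this
  rw [inscribedSum_eq_range, hn]
  simp

lemma snoc_chord_le {c d e : ℝ} (hcd : c ≤ d) (hde : d ≤ e) :
    curveLength f c d + ENNReal.ofReal ‖f e - f d‖ ≤ curveLength f c e := by
  rcases eq_or_lt_of_le hde with rfl | h
  · simp only [sub_self, norm_zero, ENNReal.ofReal_zero, add_zero, le_refl]
  · have : Nonempty (IntervalPartition c d) := IntervalPartition.nonempty hcd
    unfold curveLength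
    rw [ENNReal.iSup_add]
    apply iSup_le
    intro P
    have : ENNReal.ofReal (inscribedSum f P) + ENNReal.ofReal ‖f e - f d‖
        = ENNReal.ofReal (inscribedSum f (P.snocP h)) := by
      rw [inscribedSum_snocP, ENNReal.ofReal_add (inscribedSum_nonneg f P) (norm_nonneg _)]
    rw [this]
    exact le_iSup (fun P : IntervalPartition c e => ENNReal.ofReal (inscribedSum f P)) (P.snocP h)

lemma curveLength_add_le {c d e : ℝ} (hcd : c ≤ d) (hde : d ≤ e) :
    curveLength f c d + curveLength f d e ≤ curveLength f c e := by
  have key : ∀ m : ℕ, ∀ e : ℝ, ∀ Q : IntervalPartition d e, Q.n = m →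
      curveLength f c d + ENNReal.ofReal (inscribedSum f Q) ≤ curveLength f c e := by
    intro m
    induction m with
    | zero =>
      intro e Q hm
      have hde' : d = e := Q.X_zero.symm.trans (Q.X_last (by omega))
      rw [inscribedSum_eq_range, hm]
      subst hde'
      simp
    | succ m ih =>
      intro e Q hm
      set t := Q.X m with ht
      have hQ0 := ih t (Q.init hm) rfl
      have hdt : d ≤ t := (Q.X_mem m).1
      have hte : t ≤ e := (Q.X_mem m).2
      rw [inscribedSum_init f Q hm,
        ENNReal.ofReal_add (inscribedSum_nonneg f _) (norm_nonneg _), ← add_assoc]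
      calc curveLength f c d + ENNReal.ofReal (inscribedSum f (Q.init hm))
            + ENNReal.ofReal ‖f e - f t‖
          ≤ curveLength f c t + ENNReal.ofReal ‖f e - f t‖ := by
            exact add_le_add_left hQ0 _
        _ ≤ curveLength f c e := snoc_chord_le f (hcd.trans hdt) hte
  have : Nonempty (IntervalPartition d e) := IntervalPartition.nonempty hde
  show curveLength f c d + (⨆ Q : IntervalPartition d e, ENNReal.ofReal (inscribedSum f Q))
      ≤ curveLength f c e
  rw [ENNReal.add_iSup]
  exact iSup_le fun Q => key Q.n e Q rfl

lemma curveLength_le_add {c x e : ℝ} (hcx : c ≤ x) (hxe : x ≤ e) :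
    curveLength f c e ≤ curveLength f c x + curveLength f x e := by
  have key : ∀ m : ℕ, ∀ e : ℝ, x ≤ e → ∀ P : IntervalPartition c e, P.n = m →
      ENNReal.ofReal (inscribedSum f P) ≤ curveLength f c x + curveLength f x e := by
    intro m
    induction m with
    | zero =>
      intro e _ P hm
      rw [inscribedSum_eq_range, hm]
      simp
    | succ m ih =>
      intro e hxe P hm
      set t := P.X m with ht
      have hct : c ≤ t := (P.X_mem m).1
      have hte : t ≤ e := (P.X_mem m).2
      rw [inscribedSum_init f P hm,
        ENNReal.ofReal_add (inscribedSum_nonneg f _) (norm_nonneg _)]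
      rcases le_or_gt x t with hxt | htx
      · have h1 := ih t hxt (P.init hm) rfl
        have h2 : ENNReal.ofReal ‖f e - f t‖ ≤ curveLength f t e :=
          chord_le_curveLength f hte
        calc ENNReal.ofReal (inscribedSum f (P.init hm)) + ENNReal.ofReal ‖f e - f t‖
            ≤ (curveLength f c x + curveLength f x t) + curveLength f t e :=
              add_le_add h1 h2
          _ = curveLength f c x + (curveLength f x t + curveLength f t e) := by
              rw [add_assoc]
          _ ≤ curveLength f c x + curveLength f x e :=
              add_le_add_right (curveLength_add_le f hxt hte) _
      · have h1 : ENNReal.ofReal (inscribedSum f (P.init hm)) ≤ curveLength f c t :=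
          ofReal_inscribedSum_le f (P.init hm)
        have htri : ‖f e - f t‖ ≤ ‖f x - f t‖ + ‖f e - f x‖ := by
          have : f e - f t = (f x - f t) + (f e - f x) := by abel
          rw [this]; exact norm_add_le _ _
        have h2 : ENNReal.ofReal ‖f e - f t‖
            ≤ ENNReal.ofReal ‖f x - f t‖ + ENNReal.ofReal ‖f e - f x‖ := by
          refine le_trans (ENNReal.ofReal_le_ofReal htri) ?_
          rw [ENNReal.ofReal_add (norm_nonneg _) (norm_nonneg _)]
        calc ENNReal.ofReal (inscribedSum f (P.init hm)) + ENNReal.ofReal ‖f e - f t‖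
            ≤ curveLength f c t + (ENNReal.ofReal ‖f x - f t‖ + ENNReal.ofReal ‖f e - f x‖) :=
              add_le_add h1 h2
          _ = (curveLength f c t + ENNReal.ofReal ‖f x - f t‖) + ENNReal.ofReal ‖f e - f x‖ := by
              rw [add_assoc]
          _ ≤ curveLength f c x + curveLength f x e :=
              add_le_add (snoc_chord_le f hct htx.le) (chord_le_curveLength f hxe)
  exact iSup_le fun P => key P.n e hxe P rfl

lemma curveLength_add {c x e : ℝ} (hcx : c ≤ x) (hxe : x ≤ e) :
    curveLength f c x + curveLength f x e = curveLength f c e :=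
  le_antisymm (curveLength_add_le f hcx hxe) (curveLength_le_add f hcx hxe)

lemma curveLength_mono_of_le {a b c d : ℝ} (hac : a ≤ c) (hcd : c ≤ d) (hdb : d ≤ b) :
    curveLength f c d ≤ curveLength f a b := by
  rw [← curveLength_add f hac (hcd.trans hdb), ← curveLength_add f hcd hdb]
  calc curveLength f c d ≤ curveLength f c d + curveLength f d b := le_self_add
    _ ≤ curveLength f a c + (curveLength f c d + curveLength f d b) := le_add_self

end Additivity
section ArcLength

variable {M : ℕ} (f : ℝ → EuclideanSpace ℝ (Fin M))

/-- Clamp to `[a,b]`. -/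
def clampI (a b t : ℝ) : ℝ := max a (min t b)

lemma clampI_mem {a b : ℝ} (hab : a ≤ b) (t : ℝ) : clampI a b t ∈ Set.Icc a b :=
  ⟨le_max_left _ _, max_le hab (min_le_right _ _)⟩

lemma clampI_of_mem {a b t : ℝ} (ht : t ∈ Set.Icc a b) : clampI a b t = t := by
  unfold clampI
  rw [min_eq_left ht.2, max_eq_right ht.1]

lemma clampI_mono (a b : ℝ) : Monotone (clampI a b) := fun _ _ h =>
  max_le_max (le_refl _) (min_le_min h (le_refl _))

variable {a b : ℝ}

lemma curveLength_ne_top (hfin : curveLength f a b ≠ ⊤) {c d : ℝ}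
    (hac : a ≤ c) (hcd : c ≤ d) (hdb : d ≤ b) : curveLength f c d ≠ ⊤ :=
  fun h => hfin (eq_top_iff.2 (h ▸ curveLength_mono_of_le f hac hcd hdb))

/-- The (global) arc length function. -/
def sFun (f : ℝ → EuclideanSpace ℝ (Fin M)) (a b : ℝ) : ℝ → ℝ :=
  fun t => (curveLength f a (clampI a b t)).toReal

lemma sFun_eq_of_mem {t : ℝ} (ht : t ∈ Set.Icc a b) :
    sFun f a b t = (curveLength f a t).toReal := by
  rw [sFun, clampI_of_mem ht]

lemma sFun_diff (hfin : curveLength f a b ≠ ⊤) {t t' : ℝ} (ht : t ∈ Set.Icc a b)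
    (ht' : t' ∈ Set.Icc a b) (htt : t ≤ t') :
    sFun f a b t' - sFun f a b t = (curveLength f t t').toReal := by
  rw [sFun_eq_of_mem f ht, sFun_eq_of_mem f ht']
  have hadd := curveLength_add f ht.1 htt
  have h1 : curveLength f a t ≠ ⊤ := curveLength_ne_top f hfin (le_refl a) ht.1 ht.2
  have h2 : curveLength f t t' ≠ ⊤ := curveLength_ne_top f hfin ht.1 htt ht'.2
  rw [← hadd, ENNReal.toReal_add h1 h2]
  ring

lemma chord_le_sFun (hfin : curveLength f a b ≠ ⊤) {t t' : ℝ} (ht : t ∈ Set.Icc a b)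
    (ht' : t' ∈ Set.Icc a b) (htt : t ≤ t') :
    ‖f t' - f t‖ ≤ sFun f a b t' - sFun f a b t := by
  rw [sFun_diff f hfin ht ht' htt]
  have h2 : curveLength f t t' ≠ ⊤ := curveLength_ne_top f hfin ht.1 htt ht'.2
  have := chord_le_curveLength f htt
  calc ‖f t' - f t‖ = (ENNReal.ofReal ‖f t' - f t‖).toReal :=
        (ENNReal.toReal_ofReal (norm_nonneg _)).symm
    _ ≤ (curveLength f t t').toReal := ENNReal.toReal_mono h2 this
  done

lemma sFun_monoOn (hfin : curveLength f a b ≠ ⊤) {t t' : ℝ} (ht : t ∈ Set.Icc a b)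
    (ht' : t' ∈ Set.Icc a b) (htt : t ≤ t') : sFun f a b t ≤ sFun f a b t' := by
  have := chord_le_sFun f hfin ht ht' htt
  have h0 := norm_nonneg (f t' - f t)
  linarith

lemma sFun_mono (hab : a ≤ b) (hfin : curveLength f a b ≠ ⊤) : Monotone (sFun f a b) := by
  intro t t' htt
  have h1 : sFun f a b t = sFun f a b (clampI a b t) := by
    rw [sFun, sFun, clampI_of_mem (clampI_mem hab t)]
  have h2 : sFun f a b t' = sFun f a b (clampI a b t') := by
    rw [sFun, sFun, clampI_of_mem (clampI_mem hab t')]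
  rw [h1, h2]
  exact sFun_monoOn f hfin (clampI_mem hab t) (clampI_mem hab t') (clampI_mono a b htt)

lemma sFun_zero_at (hab : a ≤ b) : sFun f a b a = 0 := by
  rw [sFun_eq_of_mem f ⟨le_refl a, hab⟩, curveLength_self]
  rfl

/-- coordinates are dominated by the norm in Euclidean space -/
lemma abs_coord_le_norm (v : EuclideanSpace ℝ (Fin M)) (j : Fin M) : |v j| ≤ ‖v‖ := by
  rw [EuclideanSpace.norm_eq, ← Real.sqrt_sq_eq_abs]
  apply Real.sqrt_le_sqrt
  calc v j ^ 2 = ‖v j‖ ^ 2 := by rw [Real.norm_eq_abs, sq_abs]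
    _ ≤ ∑ i, ‖v i‖ ^ 2 := Finset.single_le_sum (f := fun i => ‖v i‖ ^ 2)
        (fun i _ => sq_nonneg _) (Finset.mem_univ j)

lemma coord_mono (hab : a ≤ b) (hfin : curveLength f a b ≠ ⊤) (j : Fin M) :
    Monotone (fun t => sFun f a b t + f (clampI a b t) j) := by
  intro t t' htt
  have h1 := chord_le_sFun f hfin (clampI_mem hab t) (clampI_mem hab t') (clampI_mono a b htt)
  have h2 := abs_coord_le_norm (f (clampI a b t') - f (clampI a b t)) j
  have h3 : (f (clampI a b t') - f (clampI a b t)) j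
      = f (clampI a b t') j - f (clampI a b t) j := rfl
  rw [h3] at h2
  have h4 : sFun f a b (clampI a b t) = sFun f a b t := by
    rw [sFun, sFun, clampI_of_mem (clampI_mem hab t)]
  have h5 : sFun f a b (clampI a b t') = sFun f a b t' := by
    rw [sFun, sFun, clampI_of_mem (clampI_mem hab t')]
  rw [h4, h5] at h1
  have := abs_le.mp h2
  simp only
  linarith [this.1]

end ArcLength
section Sigma

variable {M : ℕ} (f : ℝ → EuclideanSpace ℝ (Fin M)) {a b : ℝ}

lemma min_mem_Icc {u v : ℝ} (hu : u ∈ Set.Icc a b) (hv : v ∈ Set.Icc a b) :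
    min u v ∈ Set.Icc a b :=
  ⟨le_min hu.1 hv.1, (min_le_left _ _).trans hu.2⟩

lemma max_mem_Icc {u v : ℝ} (hu : u ∈ Set.Icc a b) (hv : v ∈ Set.Icc a b) :
    max u v ∈ Set.Icc a b :=
  ⟨hu.1.trans (le_max_left _ _), max_le hu.2 hv.2⟩

lemma chain_sum_le {S : ℝ → ℝ}
    (hmono : ∀ u v : ℝ, u ∈ Set.Icc a b → v ∈ Set.Icc a b → u ≤ v → S u ≤ S v)
    (u v : ℕ → ℝ) (hu : ∀ i, u i ∈ Set.Icc a b) (hv : ∀ i, v i ∈ Set.Icc a b)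
    (huv : ∀ i, u i ≤ v i) (hvu : ∀ i, v i ≤ u (i + 1))
    {c : ℝ} (hc : c ∈ Set.Icc a b) (hc0 : c ≤ u 0) :
    ∀ m : ℕ, (∑ i ∈ Finset.range m, (S (v i) - S (u i))) ≤ S (u m) - S c := by
  intro m
  induction m with
  | zero => simpa using hmono c (u 0) hc (hu 0) hc0
  | succ m ih =>
    rw [Finset.sum_range_succ]
    have h1 : S (v m) ≤ S (u (m + 1)) := hmono _ _ (hv m) (hu (m+1)) (hvu m)
    linarith

/-- The per-interval estimate in the proof that `s - σ` is monotone. -/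
lemma term_le {S : ℝ → ℝ}
    (hchord : ∀ u v : ℝ, u ∈ Set.Icc a b → v ∈ Set.Icc a b → u ≤ v →
      ‖f v - f u‖ ≤ S v - S u)
    {x1 x2 t t' : ℝ} (hx1 : x1 ∈ Set.Icc a b) (hx2 : x2 ∈ Set.Icc a b)
    (ht : t ∈ Set.Icc a b) (ht' : t' ∈ Set.Icc a b) (h12 : x1 ≤ x2) (htt : t ≤ t') :
    ‖f (min x2 t') - f (min x1 t')‖ - ‖f (min x2 t) - f (min x1 t)‖
      ≤ S (max t (min x2 t')) - S (max t (max (min x2 t) (min x1 t'))) := by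
  have hmono : ∀ u v : ℝ, u ∈ Set.Icc a b → v ∈ Set.Icc a b → u ≤ v → S u ≤ S v := by
    intro u v hu hv huv
    have := hchord u v hu hv huv
    have := norm_nonneg (f v - f u)
    linarith
  rcases le_or_gt t' x1 with h1 | h1
  · -- t ≤ t' ≤ x1 ≤ x2
    rw [min_eq_right h1, min_eq_right (h1.trans h12),
      min_eq_right (htt.trans h1), min_eq_right ((htt.trans h1).trans h12)]
    simp [max_eq_right htt, max_comm]
  rcases le_or_gt x2 t with h2 | h2
  · -- x1 ≤ x2 ≤ t ≤ t'
    rw [min_eq_left (h2.trans htt), min_eq_left ((h12.trans h2).trans htt),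
      min_eq_left h2, min_eq_left (h12.trans h2)]
    rw [max_eq_left h12, max_eq_left h2]
    simp
  rcases le_or_gt x1 t with h3 | h3
  · -- x1 ≤ t < x2, x1 < t'
    rw [min_eq_left (h3.trans htt), min_eq_left h3, min_eq_right h2.le]
    set β' := min x2 t' with hβ'
    have hβ't : t ≤ β' := le_min h2.le htt
    have hβ'mem : β' ∈ Set.Icc a b := min_mem_Icc hx2 ht'
    rw [max_eq_right hβ't, max_eq_left h3, max_self]
    have htri : ‖f β' - f x1‖ - ‖f t - f x1‖ ≤ ‖f β' - f t‖ := by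
      have h := norm_sub_norm_le (f β' - f x1) (f t - f x1)
      have : f β' - f x1 - (f t - f x1) = f β' - f t := by abel
      rwa [this] at h
    have := hchord t β' ht hβ'mem hβ't
    linarith
  · -- t < x1 < t'
    rw [min_eq_right h3.le, min_eq_right (h3.trans_le h12).le, min_eq_left h1.le]
    set β' := min x2 t' with hβ'
    have hx1β' : x1 ≤ β' := le_min h12 h1.le
    have hβ'mem : β' ∈ Set.Icc a b := min_mem_Icc hx2 ht'
    rw [max_eq_right h3.le, max_eq_right h3.le, max_eq_right (h3.le.trans hx1β')]
    have := hchord x1 β' hx1 hβ'mem hx1β'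
    simp only [sub_self, norm_zero, sub_zero]
    linarith

/-- The inscribed polygonal arc-length function of a partition. -/
def sigmaFun (f : ℝ → EuclideanSpace ℝ (Fin M)) (a b : ℝ) (P : IntervalPartition a b) : ℝ → ℝ :=
  fun t => ∑ i ∈ Finset.range P.n,
    ‖f (min (P.X (i+1)) (clampI a b t)) - f (min (P.X i) (clampI a b t))‖

lemma sigmaFun_clamp (hab : a ≤ b) (P : IntervalPartition a b) (t : ℝ) :
    sigmaFun f a b P (clampI a b t) = sigmaFun f a b P t := by
  unfold sigmaFun
  rw [clampI_of_mem (clampI_mem hab t)]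

lemma sigmaFun_left (hab : a ≤ b) (P : IntervalPartition a b) : sigmaFun f a b P a = 0 := by
  unfold sigmaFun
  rw [clampI_of_mem ⟨le_refl a, hab⟩]
  apply Finset.sum_eq_zero
  intro i _
  rw [min_eq_right (P.X_mem (i+1)).1, min_eq_right (P.X_mem i).1]
  simp

lemma sigmaFun_right (hab : a ≤ b) (P : IntervalPartition a b) {t : ℝ} (hbt : b ≤ t) :
    sigmaFun f a b P t = inscribedSum f P := by
  unfold sigmaFun
  have hcl : clampI a b t = b := by
    unfold clampI
    rw [min_eq_right hbt, max_eq_right hab]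
  rw [hcl, inscribedSum_eq_range]
  apply Finset.sum_congr rfl
  intro i _
  rw [min_eq_left (P.X_mem (i+1)).2, min_eq_left (P.X_mem i).2]

/-- The key monotonicity: `s - σ` is monotone. -/
lemma sFun_sub_sigmaFun_mono (hab : a ≤ b) (hfin : curveLength f a b ≠ ⊤)
    (P : IntervalPartition a b) : Monotone (fun t => sFun f a b t - sigmaFun f a b P t) := by
  have hchord : ∀ u v : ℝ, u ∈ Set.Icc a b → v ∈ Set.Icc a b → u ≤ v →
      ‖f v - f u‖ ≤ sFun f a b v - sFun f a b u :=
    fun u v hu hv huv => chord_le_sFun f hfin hu hv huv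
  have hmono : ∀ u v : ℝ, u ∈ Set.Icc a b → v ∈ Set.Icc a b → u ≤ v →
      sFun f a b u ≤ sFun f a b v := fun u v hu hv huv => sFun_monoOn f hfin hu hv huv
  intro t t' htt
  simp only
  set c := clampI a b t with hc
  set c' := clampI a b t' with hc'
  have hcm : c ∈ Set.Icc a b := clampI_mem hab t
  have hcm' : c' ∈ Set.Icc a b := clampI_mem hab t'
  have hcc' : c ≤ c' := clampI_mono a b htt
  have hs1 : sFun f a b t = sFun f a b c := by rw [sFun, sFun, hc, clampI_of_mem hcm]
  have hs2 : sFun f a b t' = sFun f a b c' := by rw [sFun, sFun, hc', clampI_of_mem hcm']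
  have hg1 : sigmaFun f a b P t = sigmaFun f a b P c := (sigmaFun_clamp f hab P t).symm
  have hg2 : sigmaFun f a b P t' = sigmaFun f a b P c' := (sigmaFun_clamp f hab P t').symm
  rw [hs1, hs2, hg1, hg2]
  -- now show σ c' - σ c ≤ S c' - S c
  set u : ℕ → ℝ := fun i => max c (max (min (P.X (i+1)) c) (min (P.X i) c')) with hu
  set v : ℕ → ℝ := fun i => max c (min (P.X (i+1)) c') with hv
  have humem : ∀ i, u i ∈ Set.Icc a b := fun i =>
    max_mem_Icc hcm (max_mem_Icc (min_mem_Icc (P.X_mem _) hcm) (min_mem_Icc (P.X_mem _) hcm'))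
  have hvmem : ∀ i, v i ∈ Set.Icc a b := fun i =>
    max_mem_Icc hcm (min_mem_Icc (P.X_mem _) hcm')
  have huv : ∀ i, u i ≤ v i := by
    intro i
    apply max_le_max (le_refl c)
    apply max_le
    · exact min_le_min (le_refl _) hcc'
    · exact min_le_min (P.X_mono (by omega)) (le_refl _)
  have hvu : ∀ i, v i ≤ u (i+1) := by
    intro i
    exact max_le_max (le_refl c) (le_max_right _ _)
  have hc0 : c ≤ u 0 := le_max_left _ _
  have hchain := chain_sum_le hmono u v humem hvmem huv hvu hcm hc0 P.n
  have hterm : ∀ i ∈ Finset.range P.n,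
      ‖f (min (P.X (i+1)) c') - f (min (P.X i) c')‖
        - ‖f (min (P.X (i+1)) c) - f (min (P.X i) c)‖
      ≤ sFun f a b (v i) - sFun f a b (u i) := by
    intro i _
    exact term_le f hchord (P.X_mem i) (P.X_mem (i+1)) hcm hcm'
      (P.X_mono (by omega)) hcc'
  have hsum : sigmaFun f a b P c' - sigmaFun f a b P c
      ≤ ∑ i ∈ Finset.range P.n, (sFun f a b (v i) - sFun f a b (u i)) := by
    unfold sigmaFun
    rw [clampI_of_mem hcm, clampI_of_mem hcm', ← Finset.sum_sub_distrib]
    exact Finset.sum_le_sum hterm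
  have hlast : u P.n ≤ c' := by
    apply max_le hcc'
    apply max_le ((min_le_right _ _).trans hcc') (min_le_right _ _)
  have := hmono (u P.n) c' (humem P.n) hcm' hlast
  linarith

end Sigma
section Local

variable {M : ℕ} (f : ℝ → EuclideanSpace ℝ (Fin M)) {a b : ℝ}

lemma exists_interval (P : IntervalPartition a b) {x : ℝ} (hx : x ∈ Set.Ioo a b)
    (hnot : ∀ i : ℕ, P.X i ≠ x) :
    ∃ k : ℕ, k < P.n ∧ P.X k < x ∧ x < P.X (k + 1) := by
  have h0 : P.X 0 < x := by rw [P.X_zero]; exact hx.1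
  set Q := fun i => P.X i < x with hQ
  have hQ0 : Q 0 := h0
  set k := Nat.findGreatest Q P.n with hk
  have hkspec : Q k := Nat.findGreatest_spec (Nat.zero_le _) hQ0
  have hkle : k ≤ P.n := Nat.findGreatest_le _
  have hkn : k < P.n := by
    rcases eq_or_lt_of_le hkle with he | h
    · exfalso
      have hbx : P.X k < x := hkspec
      rw [P.X_last (le_of_eq he.symm)] at hbx
      exact absurd hx.2 (not_lt.mpr hbx.le)
    · exact h
  refine ⟨k, hkn, hkspec, ?_⟩
  have hnk : ¬ Q (k + 1) := Nat.findGreatest_is_greatest (Nat.lt_succ_self k) (by omega)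
  rcases lt_or_eq_of_le (not_lt.mp hnk) with h | h
  · exact h
  · exact absurd h.symm (hnot (k+1))

lemma sigmaFun_sub_local (P : IntervalPartition a b) {k : ℕ} (hk : k < P.n) {x y : ℝ}
    (hx1 : P.X k < x) (hx2 : x < P.X (k + 1)) (hy1 : P.X k < y) (hy2 : y < P.X (k + 1)) :
    sigmaFun f a b P y - sigmaFun f a b P x
      = ‖f y - f (P.X k)‖ - ‖f x - f (P.X k)‖ := by
  have hxm : x ∈ Set.Icc a b :=
    ⟨(P.X_mem k).1.trans hx1.le, hx2.le.trans (P.X_mem (k+1)).2⟩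
  have hym : y ∈ Set.Icc a b :=
    ⟨(P.X_mem k).1.trans hy1.le, hy2.le.trans (P.X_mem (k+1)).2⟩
  unfold sigmaFun
  rw [clampI_of_mem hxm, clampI_of_mem hym, ← Finset.sum_sub_distrib]
  rw [Finset.sum_eq_single_of_mem k (Finset.mem_range.mpr hk)]
  · rw [min_eq_right hy2.le, min_eq_left hy1.le, min_eq_right hx2.le, min_eq_left hx1.le]
  · intro i hi hik
    rcases lt_or_gt_of_ne hik with h | h
    · -- i < k
      have h1y : P.X (i+1) ≤ y := (P.X_mono (by omega)).trans hy1.le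
      have h1x : P.X (i+1) ≤ x := (P.X_mono (by omega)).trans hx1.le
      have h2y : P.X i ≤ y := (P.X_mono (by omega)).trans hy1.le
      have h2x : P.X i ≤ x := (P.X_mono (by omega)).trans hx1.le
      rw [min_eq_left h1y, min_eq_left h2y, min_eq_left h1x, min_eq_left h2x]
      ring
    · -- i > k, so P.X i ≥ P.X (k+1) > x, y
      have h1y : y ≤ P.X i := hy2.le.trans (P.X_mono (by omega))
      have h1x : x ≤ P.X i := hx2.le.trans (P.X_mono (by omega))
      have h2y : y ≤ P.X (i+1) := h1y.trans (P.X_mono (by omega))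
      have h2x : x ≤ P.X (i+1) := h1x.trans (P.X_mono (by omega))
      rw [min_eq_right h1y, min_eq_right h2y, min_eq_right h1x, min_eq_right h2x]
      simp

/-- Choice of good partitions. -/
lemma exists_good_partition (hab : a < b) (hfin : curveLength f a b ≠ ⊤) (n : ℕ) :
    ∃ P : IntervalPartition a b,
      (curveLength f a b).toReal ≤ inscribedSum f P + (2:ℝ)⁻¹ ^ n := by
  set L := curveLength f a b with hL
  have hεpos : (0:ℝ) < (2:ℝ)⁻¹ ^ n := by positivity
  rcases eq_or_ne L 0 with h0 | h0
  · refine ⟨IntervalPartition.pair hab, ?_⟩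
    rw [h0]
    simp only [ENNReal.toReal_zero]
    have := inscribedSum_nonneg f (IntervalPartition.pair hab)
    linarith
  · set ε := ENNReal.ofReal ((2:ℝ)⁻¹ ^ n) with hε
    have hεne : ε ≠ 0 := by
      simp [hε, ENNReal.ofReal_eq_zero, not_le, hεpos]
    have hsub : L - ε < L := ENNReal.sub_lt_self hfin h0 hεne
    have : L - ε < ⨆ P : IntervalPartition a b, ENNReal.ofReal (inscribedSum f P) := hsub
    rw [lt_iSup_iff] at this
    obtain ⟨P, hP⟩ := this
    refine ⟨P, ?_⟩
    have hLle : L ≤ ENNReal.ofReal (inscribedSum f P) + ε := by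
      rcases le_or_gt L ε with h | h
      · exact h.trans le_add_self
      · have := ENNReal.sub_lt_iff_lt_right (by simp [hε]) h.le |>.mp hP
        exact this.le.trans (le_of_eq rfl)
    calc L.toReal ≤ (ENNReal.ofReal (inscribedSum f P) + ε).toReal := by
          apply ENNReal.toReal_mono _ hLle
          simp [hε, ENNReal.add_eq_top]
      _ = inscribedSum f P + (2:ℝ)⁻¹ ^ n := by
          rw [ENNReal.toReal_add (by simp) (by simp [hε]),
            ENNReal.toReal_ofReal (inscribedSum_nonneg f P),
            hε, ENNReal.toReal_ofReal hεpos.le]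

lemma gFun_props (hab : a < b) (hfin : curveLength f a b ≠ ⊤) (P : IntervalPartition a b)
    (hP : (curveLength f a b).toReal ≤ inscribedSum f P + (2:ℝ)⁻¹ ^ n) :
    True := trivial

end Local
section Stieltjes

open Function in
lemma stieltjes_measure_univ_eq {g : ℝ → ℝ} (hg : Monotone g) {a b C : ℝ}
    (hga : ∀ t, t ≤ a → g t = 0) (hgb : ∀ t, b ≤ t → g t = C) :
    hg.stieltjesFunction.measure Set.univ = ENNReal.ofReal C := by
  rw [show C = C - 0 by ring]
  apply StieltjesFunction.measure_univ (l := 0) (u := C)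
  · apply Tendsto.congr' _ (tendsto_const_nhds (x := (0:ℝ)))
    filter_upwards [eventually_le_atBot (a - 1)] with t ht
    rw [hg.stieltjesFunction_eq]
    have h1 : g t ≤ rightLim g t := hg.le_rightLim le_rfl
    have h2 : rightLim g t ≤ g a := hg.rightLim_le (by linarith)
    have h3 : g t = 0 := hga t (by linarith)
    have h4 : g a = 0 := hga a le_rfl
    linarith
  · apply Tendsto.congr' _ (tendsto_const_nhds (x := C))
    filter_upwards [eventually_ge_atTop b] with t ht
    rw [hg.stieltjesFunction_eq]
    have h1 : g t ≤ rightLim g t := hg.le_rightLim le_rfl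
    have h2 : rightLim g t ≤ g (t + 1) := hg.rightLim_le (by linarith)
    have h3 : g t = C := hgb t ht
    have h4 : g (t + 1) = C := hgb _ (by linarith)
    linarith

end Stieltjes
/-- For a continuous rectifiable curve `C ↔ f : [a,b] → ℝ^M` with arc length
function `s(x) = ℓ(f on [a,x])`, for Lebesgue-a.e. `x ∈ [a,b]` both `s′(x)` and `f′(x)`
exist and `s′(x) = ‖f′(x)‖`. -/
theorem deriv_arcLength_eq_norm_deriv {M : ℕ} (a b : ℝ) (hab : a < b)
    (f : ℝ → EuclideanSpace ℝ (Fin M))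
    (hcont : ContinuousOn f (Set.Icc a b)) (hrect : curveLength f a b < ⊤) :
    ∀ᵐ x ∂(volume : Measure ℝ), x ∈ Set.Icc a b →
      DifferentiableAt ℝ (fun y => (curveLength f a y).toReal) x ∧
      DifferentiableAt ℝ f x ∧
      deriv (fun y => (curveLength f a y).toReal) x = ‖deriv f x‖ := by
  have hfin : curveLength f a b ≠ ⊤ := hrect.ne
  have hab' : a ≤ b := hab.le
  set S : ℝ → ℝ := sFun f a b with hSdef
  have hSmono : Monotone S := sFun_mono f hab' hfin
  -- good partitions
  choose P hP using fun n => exists_good_partition f hab hfin n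
  set g : ℕ → ℝ → ℝ := fun n t => S t - sigmaFun f a b (P n) t with hgdef
  have hgmono : ∀ n, Monotone (g n) := fun n => sFun_sub_sigmaFun_mono f hab' hfin (P n)
  set D : ℕ → ℝ → ℝ≥0∞ :=
    fun n => ((hgmono n).stieltjesFunction.measure).rnDeriv volume with hDdef
  -- boundary values of g
  have hga : ∀ n t, t ≤ a → g n t = 0 := by
    intro n t ht
    have hcl : clampI a b t = a := by
      unfold clampI
      rw [max_eq_left ((min_le_left t b).trans ht)]
    have h1 : S t = 0 := by
      rw [hSdef, sFun, hcl, curveLength_self]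
      rfl
    have h2 : sigmaFun f a b (P n) t = 0 := by
      rw [← sigmaFun_clamp f hab' (P n) t, hcl, sigmaFun_left f hab']
    simp [hgdef, h1, h2]
  have hgb : ∀ n t, b ≤ t →
      g n t = (curveLength f a b).toReal - inscribedSum f (P n) := by
    intro n t ht
    have hcl : clampI a b t = b := by
      unfold clampI
      rw [min_eq_right ht, max_eq_right hab']
    have h1 : S t = (curveLength f a b).toReal := by rw [hSdef, sFun, hcl]
    have h2 : sigmaFun f a b (P n) t = inscribedSum f (P n) :=
      sigmaFun_right f hab' (P n) ht
    simp [hgdef, h1, h2]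
  -- measure bound
  have hμ : ∀ n, (hgmono n).stieltjesFunction.measure Set.univ
      ≤ ENNReal.ofReal ((2:ℝ)⁻¹ ^ n) := by
    intro n
    rw [stieltjes_measure_univ_eq (hgmono n) (hga n) (hgb n)]
    exact ENNReal.ofReal_le_ofReal (by have := hP n; linarith)
  have hlint : ∀ n, ∫⁻ x, D n x ∂volume ≤ ENNReal.ofReal ((2:ℝ)⁻¹ ^ n) :=
    fun n => (Measure.lintegral_rnDeriv_le).trans (hμ n)
  -- the sum is finite
  have htsum : ∫⁻ x, (∑' n, D n x) ∂volume ≠ ⊤ := by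
    rw [lintegral_tsum (fun n => (Measure.measurable_rnDeriv _ _).aemeasurable)]
    have h1 : (∑' n, ∫⁻ x, D n x ∂volume) ≤ ∑' n : ℕ, ENNReal.ofReal ((2:ℝ)⁻¹ ^ n) :=
      ENNReal.tsum_le_tsum hlint
    have h2 : (∑' n : ℕ, ENNReal.ofReal ((2:ℝ)⁻¹ ^ n)) ≠ ⊤ := by
      have : ∀ n : ℕ, ENNReal.ofReal ((2:ℝ)⁻¹ ^ n) = ENNReal.ofReal 2⁻¹ ^ n := by
        intro n
        rw [← ENNReal.ofReal_pow (by norm_num)]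
      rw [tsum_congr this, ENNReal.tsum_geometric, Ne, ENNReal.inv_eq_top,
        tsub_eq_zero_iff_le]
      apply not_le.mpr
      rw [← ENNReal.ofReal_one]
      exact ENNReal.ofReal_lt_ofReal_iff_of_nonneg (by norm_num) |>.mpr (by norm_num)
    exact (h1.trans_lt h2.lt_top).ne
  have haeD : ∀ᵐ x : ℝ ∂volume, Tendsto (fun n => (D n x).toReal) atTop (𝓝 0) := by
    have := ae_lt_top (f := fun x => ∑' n, D n x)
      (Measurable.ennreal_tsum fun n => Measure.measurable_rnDeriv _ _) htsum
    filter_upwards [this] with x hx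
    have h0 : Tendsto (fun n => D n x) atTop (𝓝 0) :=
      ENNReal.tendsto_atTop_zero_of_tsum_ne_top hx.ne
    have := (ENNReal.tendsto_toReal (a := 0) (by simp)).comp h0
    simpa [Function.comp_def] using this
  -- bad (countable) set
  set T : Set ℝ := {a, b} ∪ ⋃ n, Set.range ((P n).X) with hTdef
  have hTcount : T.Countable := by
    apply Set.Countable.union (by simp)
    exact Set.countable_iUnion fun n => Set.countable_range _
  have haeT : ∀ᵐ x : ℝ ∂volume, x ∉ T :=
    measure_eq_zero_iff_ae_notMem.mp (Set.Countable.measure_zero hTcount volume)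
  -- a.e. differentiability facts
  have haeG : ∀ᵐ x : ℝ ∂volume, ∀ n, HasDerivAt (g n) ((D n x).toReal) x :=
    ae_all_iff.mpr fun n => (hgmono n).ae_hasDerivAt
  have haeS : ∀ᵐ x : ℝ ∂volume, DifferentiableAt ℝ S x := hSmono.ae_differentiableAt
  have haeC : ∀ᵐ x : ℝ ∂volume, ∀ j : Fin M,
      DifferentiableAt ℝ (fun t => S t + f (clampI a b t) j) x :=
    ae_all_iff.mpr fun j => (coord_mono f hab' hfin j).ae_differentiableAt
  -- main argument
  filter_upwards [haeD, haeT, haeG, haeS, haeC] with x hxD hxT hxG hxS hxC hxIcc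
  have hxa : x ≠ a := fun h => hxT (by rw [hTdef]; exact Set.mem_union_left _ (by simp [h]))
  have hxb : x ≠ b := fun h => hxT (by rw [hTdef]; exact Set.mem_union_left _ (by simp [h]))
  have hxIoo : x ∈ Set.Ioo a b := ⟨hxIcc.1.lt_of_ne (Ne.symm hxa), hxIcc.2.lt_of_ne hxb⟩
  have hxP : ∀ n (i : ℕ), (P n).X i ≠ x := by
    intro n i h
    exact hxT (by
      rw [hTdef]
      exact Set.mem_union_right _ (Set.mem_iUnion.mpr ⟨n, ⟨i, h⟩⟩))
  -- differentiability of f at x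
  have hfc : DifferentiableAt ℝ (fun t => f (clampI a b t)) x := by
    have hpi : DifferentiableAt ℝ (fun t => (fun j : Fin M => f (clampI a b t) j)) x := by
      apply differentiableAt_pi.mpr
      intro j
      have := (hxC j).sub hxS
      simpa [Pi.sub_def] using this
    have heq : (fun t => f (clampI a b t))
        = fun t => (EuclideanSpace.equiv (Fin M) ℝ).symm (fun j : Fin M => f (clampI a b t) j) :=
      rfl
    rw [heq]
    exact ((EuclideanSpace.equiv (Fin M) ℝ).symm.differentiableAt).comp x hpi
  have hff : f =ᶠ[nhds x] (fun t => f (clampI a b t)) := by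
    filter_upwards [Ioo_mem_nhds hxIoo.1 hxIoo.2] with y hy
    rw [clampI_of_mem (Set.mem_Icc_of_Ioo hy)]
  have hfdiff : DifferentiableAt ℝ f x := hfc.congr_of_eventuallyEq hff
  -- target function agrees with S near x
  have hsf : (fun y => (curveLength f a y).toReal) =ᶠ[nhds x] S := by
    filter_upwards [Ioo_mem_nhds hxIoo.1 hxIoo.2] with y hy
    rw [hSdef, sFun_eq_of_mem f (Set.mem_Icc_of_Ioo hy)]
  have hTdiff : DifferentiableAt ℝ (fun y => (curveLength f a y).toReal) x :=
    hxS.congr_of_eventuallyEq hsf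
  have hTderiv : deriv (fun y => (curveLength f a y).toReal) x = deriv S x :=
    hsf.deriv_eq
  refine ⟨hTdiff, hfdiff, ?_⟩
  rw [hTderiv]
  -- slope limits
  have hfd : HasDerivAt f (deriv f x) x := hfdiff.hasDerivAt
  have hSd : HasDerivAt S (deriv S x) x := hxS.hasDerivAt
  have hsub : Set.Ioi x ⊆ {x}ᶜ := fun y hy => ne_of_gt hy
  have hslopef : Tendsto (fun y => ‖f y - f x‖ / (y - x)) (nhdsWithin x (Set.Ioi x))
      (𝓝 ‖deriv f x‖) := by
    have h1 : Tendsto (slope f x) (nhdsWithin x {x}ᶜ) (𝓝 (deriv f x)) :=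
      hasDerivAt_iff_tendsto_slope.mp hfd
    have h2 : Tendsto (slope f x) (nhdsWithin x (Set.Ioi x)) (𝓝 (deriv f x)) :=
      h1.mono_left (nhdsWithin_mono x hsub)
    have h3 := (continuous_norm.continuousAt (x := deriv f x)).tendsto.comp h2
    apply h3.congr'
    filter_upwards [self_mem_nhdsWithin] with y hy
    have hyx : (0:ℝ) < y - x := sub_pos.mpr hy
    show ‖slope f x y‖ = ‖f y - f x‖ / (y - x)
    rw [slope_def_module, norm_smul, norm_inv, Real.norm_eq_abs, abs_of_pos hyx,
      div_eq_inv_mul]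
  have hslopeS : Tendsto (fun y => (S y - S x) / (y - x)) (nhdsWithin x (Set.Ioi x))
      (𝓝 (deriv S x)) := by
    have h1 : Tendsto (slope S x) (nhdsWithin x {x}ᶜ) (𝓝 (deriv S x)) :=
      hasDerivAt_iff_tendsto_slope.mp hSd
    exact (h1.mono_left (nhdsWithin_mono x hsub)).congr fun y => by
      rw [slope_def_field]
  -- lower bound: ‖f'‖ ≤ S'
  have hge : ‖deriv f x‖ ≤ deriv S x := by
    refine le_of_tendsto_of_tendsto hslopef hslopeS ?_
    filter_upwards [Ioo_mem_nhdsGT hxIoo.2, self_mem_nhdsWithin] with y hy hy'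
    have hym : y ∈ Set.Icc a b := ⟨hxIcc.1.trans hy.1.le, hy.2.le⟩
    have hchord := chord_le_sFun f hfin hxIcc hym hy.1.le
    have hyx : (0:ℝ) < y - x := sub_pos.mpr hy.1
    show ‖f y - f x‖ / (y - x) ≤ (S y - S x) / (y - x)
    gcongr
  -- upper bound: S' ≤ ‖f'‖ + D n
  have hle : ∀ n : ℕ, deriv S x ≤ ‖deriv f x‖ + (D n x).toReal := by
    intro n
    obtain ⟨k, hkn, hk1, hk2⟩ := exists_interval (P n) hxIoo (hxP n)
    have hgd : HasDerivAt (g n) ((D n x).toReal) x := hxG n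
    have hσd : HasDerivAt (sigmaFun f a b (P n)) (deriv S x - (D n x).toReal) x := by
      have h := hSd.sub hgd
      have heq : (fun t => S t - g n t) = sigmaFun f a b (P n) := by
        funext t
        simp [hgdef]
      rw [← heq]; exact h
    have hσslope : Tendsto
        (fun y => (sigmaFun f a b (P n) y - sigmaFun f a b (P n) x) / (y - x))
        (nhdsWithin x (Set.Ioi x)) (𝓝 (deriv S x - (D n x).toReal)) := by
      have h1 := hasDerivAt_iff_tendsto_slope.mp hσd
      exact (h1.mono_left (nhdsWithin_mono x hsub)).congr fun y => by rw [slope_def_field]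
    have hkey : deriv S x - (D n x).toReal ≤ ‖deriv f x‖ := by
      refine le_of_tendsto_of_tendsto hσslope hslopef ?_
      filter_upwards [Ioo_mem_nhdsGT hk2, self_mem_nhdsWithin] with y hy hy'
      have hyx : (0:ℝ) < y - x := sub_pos.mpr hy'
      have hloc := sigmaFun_sub_local f (P n) hkn hk1 hk2 (lt_trans hk1 hy') hy.2
      have htri : ‖f y - f ((P n).X k)‖ - ‖f x - f ((P n).X k)‖ ≤ ‖f y - f x‖ := by
        have h := norm_sub_norm_le (f y - f ((P n).X k)) (f x - f ((P n).X k))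
        have he : f y - f ((P n).X k) - (f x - f ((P n).X k)) = f y - f x := by abel
        rwa [he] at h
      show (sigmaFun f a b (P n) y - sigmaFun f a b (P n) x) / (y - x)
          ≤ ‖f y - f x‖ / (y - x)
      rw [hloc]
      gcongr
    linarith
  have hle' : deriv S x ≤ ‖deriv f x‖ := by
    have hlim : Tendsto (fun n => ‖deriv f x‖ + (D n x).toReal) atTop
        (𝓝 (‖deriv f x‖ + 0)) := tendsto_const_nhds.add hxD
    have := ge_of_tendsto' hlim hle
    simpa using this
  exact le_antisymm hle' hge

end
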